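/- For any matroid M on ground set E, the CI-structure of the dual matroid satisfies [[M*]] = [[M]]*, where for a CI-structure G on E, G* := {(ij | E \ (ij∪K)) : (ij|K) ∈ G}. -/

import Mathlib

open Finset

/-- A matroid on a finite ground set `E`, given by its rank function. -/
structure FinMatroid (α : Type*) [DecidableEq α] where
  E : Finset α
  r : Finset α → ℕ
  r_empty : r ∅ = 0
  r_le_card : ∀ ⦃A⦄, A ⊆ E → r A ≤ A.card
  r_mono : ∀ ⦃A B : Finset α⦄, A ⊆ B → B ⊆ E → r A ≤ r B
  r_submod : ∀ ⦃A B : Finset α⦄, A ⊆ E → B ⊆ E → r (A ∪ B) + r (A ∩ B) ≤ r A + r B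

namespace FinMatroid

variable {α : Type*} [DecidableEq α]

/-- A set is independent if it is subcardinal-tight for the rank function. -/
def Indep (M : FinMatroid α) (S : Finset α) : Prop := S ⊆ M.E ∧ M.r S = S.card

/-- A circuit is a minimal dependent set. -/
def Circuit (M : FinMatroid α) (C : Finset α) : Prop :=
  C ⊆ M.E ∧ M.r C < C.card ∧ ∀ S, S ⊂ C → M.r S = S.card

/-- `B` is a basis of `S` if it is a maximal independent subset of `S`. -/
def BasisOf (M : FinMatroid α) (B S : Finset α) : Prop :=
  B ⊆ S ∧ M.Indep B ∧ ∀ x ∈ S, x ∉ B → ¬ M.Indep (insert x B)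

/-- The conditional independence statement `(ij|K)` holds in `M`:
`r(iK) + r(jK) = r(ijK) + r(K)`. -/
def CI (M : FinMatroid α) (i j : α) (K : Finset α) : Prop :=
  M.r (insert i K) + M.r (insert j K) = M.r (insert i (insert j K)) + M.r K

/-- A matroid is loopless if every singleton of the ground set is independent. -/
def Loopless (M : FinMatroid α) : Prop := ∀ e ∈ M.E, M.r {e} = 1

end FinMatroid

/-- Well-formedness of a CI-statement `(ij|K)` on ground set `E`. -/
def wfCI {α : Type*} [DecidableEq α] (E : Finset α) (i j : α) (K : Finset α) : Prop :=
  i ∈ E ∧ j ∈ E ∧ i ≠ j ∧ i ∉ K ∧ j ∉ K ∧ K ⊆ E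

/-- The CI-structure `[[M]]` of a matroid, as a predicate on CI-statements. -/
def FinMatroid.ciOf {α : Type*} [DecidableEq α] (M : FinMatroid α) :
    α → α → Finset α → Prop :=
  fun i j K => wfCI M.E i j K ∧ M.CI i j K

/-- The dual matroid, with rank function `r*(S) = |S| + r(E \ S) - r(E)`. -/
def FinMatroid.dual {α : Type*} [DecidableEq α] (M : FinMatroid α) :
    FinMatroid α where
  E := M.E
  r S := S.card + M.r (M.E \ S) - M.r M.E
  r_empty := by simp
  r_le_card := by
    intro S hS
    try dsimp only
    have h1 : M.r (M.E \ S) ≤ M.r M.E := M.r_mono sdiff_subset (Finset.Subset.refl _)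
    omega
  r_mono := by
    intro S T hST hT
    try dsimp only
    have hS : S ⊆ M.E := hST.trans hT
    have key : M.E \ S = (M.E \ T) ∪ (T \ S) := by
      ext x
      simp only [mem_sdiff, mem_union]
      have h1 : x ∈ S → x ∈ T := fun h => hST h
      have h2 : x ∈ T → x ∈ M.E := fun h => hT h
      tauto
    have h3 : M.r (M.E \ S) ≤ M.r (M.E \ T) + (T \ S).card := by
      have hTS : T \ S ⊆ M.E := (sdiff_subset).trans hT
      have hsub := M.r_submod (A := M.E \ T) (B := T \ S) sdiff_subset hTS
      have hcard : M.r (T \ S) ≤ (T \ S).card := M.r_le_card hTS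
      rw [key]
      omega
    have h4 : (T \ S).card = T.card - S.card := card_sdiff_of_subset hST
    have h5 : S.card ≤ T.card := card_le_card hST
    omega
  r_submod := by
    intro S T hS hT
    try dsimp only
    have k1 : (M.E \ S) ∪ (M.E \ T) = M.E \ (S ∩ T) := by
      ext x; simp only [mem_sdiff, mem_union, mem_inter]; tauto
    have k2 : (M.E \ S) ∩ (M.E \ T) = M.E \ (S ∪ T) := by
      ext x; simp only [mem_sdiff, mem_union, mem_inter]; tauto
    have h := M.r_submod (A := M.E \ S) (B := M.E \ T) sdiff_subset sdiff_subset
    rw [k1, k2] at h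
    have c := card_union_add_card_inter S T
    have lb : ∀ X : Finset α, X ⊆ M.E → M.r M.E ≤ X.card + M.r (M.E \ X) := by
      intro X hX
      have e1 : (M.E \ X) ∪ X = M.E := by
        ext x
        simp only [mem_sdiff, mem_union]
        have h1 : x ∈ X → x ∈ M.E := fun h => hX h
        tauto
      have h2 := M.r_submod (A := M.E \ X) (B := X) sdiff_subset hX
      have h3 := M.r_le_card hX
      rw [e1] at h2
      omega
    have l1 := lb S hS
    have l2 := lb T hT
    have l3 := lb (S ∪ T) (union_subset hS hT)
    have l4 := lb (S ∩ T) ((inter_subset_left).trans hS)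
    omega

/-- `[[M*]] = [[M]]*`: a CI-statement `(ij|K)` belongs to the
CI-structure of the dual matroid iff it is of the form `(ij | E \ ijK')` for
some `(ij|K')` in `[[M]]`. -/

private lemma rank_lb {α : Type*} [DecidableEq α] (M : FinMatroid α) {X : Finset α}
    (hX : X ⊆ M.E) : M.r M.E ≤ X.card + M.r (M.E \ X) := by
  have e1 : (M.E \ X) ∪ X = M.E := by
    ext x
    simp only [mem_sdiff, mem_union]
    have h1 : x ∈ X → x ∈ M.E := fun h => hX h
    tauto
  have h2 := M.r_submod (A := M.E \ X) (B := X) sdiff_subset hX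
  have h3 := M.r_le_card hX
  rw [e1] at h2
  omega

set_option maxHeartbeats 1000000 in
private lemma key_iff {α : Type*} [DecidableEq α] (M : FinMatroid α) {i j : α}
    {K' : Finset α} (h : wfCI M.E i j K') :
    M.dual.CI i j (M.E \ (insert i (insert j K'))) ↔ M.CI i j K' := by
  obtain ⟨hi, hj, hij, hiK', hjK', hK'E⟩ := h
  set K := M.E \ (insert i (insert j K')) with hK
  have hKE : K ⊆ M.E := sdiff_subset
  have hiK : i ∉ K := by simp [hK]
  have hjK : j ∉ K := by simp [hK]
  have hijK : i ∉ insert j K := by simp [hiK, hij]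
  have e1 : M.E \ insert i K = insert j K' := by
    ext x
    simp only [hK, mem_sdiff, mem_insert]
    have h1 : x ∈ K' → x ∈ M.E := fun h => hK'E h
    have h2 : x = j → x ∈ M.E := fun h => h ▸ hj
    have h3 : x = j → ¬ x = i := fun h => h ▸ fun hh => hij hh.symm
    have h4 : x ∈ K' → ¬ x = i := fun h hh => hiK' (hh ▸ h)
    tauto
  have e2 : M.E \ insert j K = insert i K' := by
    ext x
    simp only [hK, mem_sdiff, mem_insert]
    have h1 : x ∈ K' → x ∈ M.E := fun h => hK'E h
    have h2 : x = i → x ∈ M.E := fun h => h ▸ hi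
    have h3 : x = i → ¬ x = j := fun h => h ▸ hij
    have h4 : x ∈ K' → ¬ x = j := fun h hh => hjK' (hh ▸ h)
    tauto
  have e3 : M.E \ insert i (insert j K) = K' := by
    ext x
    simp only [hK, mem_sdiff, mem_insert]
    have h1 : x ∈ K' → x ∈ M.E := fun h => hK'E h
    have h4 : x ∈ K' → ¬ x = i := fun h hh => hiK' (hh ▸ h)
    have h5 : x ∈ K' → ¬ x = j := fun h hh => hjK' (hh ▸ h)
    tauto
  have e4 : M.E \ K = insert i (insert j K') := by
    ext x
    simp only [hK, mem_sdiff, mem_insert]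
    have h1 : x ∈ K' → x ∈ M.E := fun h => hK'E h
    have h2 : x = i → x ∈ M.E := fun h => h ▸ hi
    have h3 : x = j → x ∈ M.E := fun h => h ▸ hj
    tauto
  have hc1 : (insert i K).card = K.card + 1 := card_insert_of_notMem hiK
  have hc2 : (insert j K).card = K.card + 1 := card_insert_of_notMem hjK
  have hc3 : (insert i (insert j K)).card = K.card + 2 := by
    rw [card_insert_of_notMem hijK, hc2]
  have l1 := rank_lb M (insert_subset hi hKE)
  have l2 := rank_lb M (insert_subset hj hKE)
  have l3 := rank_lb M (insert_subset hi (insert_subset hj hKE))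
  have l4 := rank_lb M hKE
  rw [e1, hc1] at l1
  rw [e2, hc2] at l2
  rw [e3, hc3] at l3
  rw [e4] at l4
  unfold FinMatroid.CI FinMatroid.dual
  dsimp only
  rw [e1, e2, e3, e4, hc1, hc2, hc3]
  omega

theorem ci_dual {α : Type*} [DecidableEq α] (M : FinMatroid α) :
    ∀ (i j : α) (K : Finset α),
      M.dual.ciOf i j K ↔
        (∃ K' : Finset α, M.ciOf i j K' ∧
          K = M.E \ (insert i (insert j K'))) := by
  intro i j K
  constructor
  · rintro ⟨⟨hi, hj, hij, hiK, hjK, hKE⟩, hci⟩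
    have hi' : i ∈ M.E := hi
    have hj' : j ∈ M.E := hj
    refine ⟨M.E \ (insert i (insert j K)), ⟨⟨hi', hj', hij, ?_, ?_, sdiff_subset⟩, ?_⟩, ?_⟩
    · simp
    · simp
    · rw [← key_iff M ⟨hi', hj', hij, by simp, by simp, sdiff_subset⟩]
      have edd : M.E \ insert i (insert j (M.E \ insert i (insert j K))) = K := by
        ext x
        simp only [mem_sdiff, mem_insert]
        have h1 : x ∈ K → x ∈ M.E := fun h => hKE h
        have h4 : x ∈ K → ¬ x = i := fun h hh => hiK (hh ▸ h)
        have h5 : x ∈ K → ¬ x = j := fun h hh => hjK (hh ▸ h)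
        tauto
      rwa [edd]
    · ext x
      simp only [mem_sdiff, mem_insert]
      have h1 : x ∈ K → x ∈ M.E := fun h => hKE h
      have h4 : x ∈ K → ¬ x = i := fun h hh => hiK (hh ▸ h)
      have h5 : x ∈ K → ¬ x = j := fun h hh => hjK (hh ▸ h)
      tauto
  · rintro ⟨K', ⟨⟨hi, hj, hij, hiK', hjK', hK'E⟩, hci⟩, rfl⟩
    refine ⟨⟨hi, hj, hij, by simp, by simp, sdiff_subset⟩, ?_⟩
    exact (key_iff M ⟨hi, hj, hij, hiK', hjK', hK'E⟩).2 hci
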